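/- arXiv:1912.02586 — 3 statements merged into one kernel-verified Lean document; each statement's English description precedes it below -/
import Mathlib

section
/- Let H1, H2 be complex Hilbert spaces, T : H1 → H2 a closed densely defined linear operator, and v ∈ H2. Then v lies in the image of T if and only if there exists a constant C ≥ 0 such that |⟨u, v⟩| ≤ C‖T*u‖ for all u in the domain of T*. Moreover in that case one can find u with Tu = v and ‖u‖ ≤ C. -/
open LinearPMap InnerProductSpace

/-- (Hörmander–von Neumann solvability criterion.) For a closed densely
defined operator `T : H1 → H2` between complex Hilbert spaces and `v ∈ H2`, `v` lies in the
image of `T` iff there is `C ≥ 0` with `|⟨u, v⟩| ≤ C ‖T† u‖` for all `u ∈ Dom T†`; moreover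
in that case one can solve `T u = v` with `‖u‖ ≤ C`. -/
theorem hormander_solvability
    {H1 H2 : Type*} [NormedAddCommGroup H1] [InnerProductSpace ℂ H1] [CompleteSpace H1]
    [NormedAddCommGroup H2] [InnerProductSpace ℂ H2] [CompleteSpace H2]
    (T : H1 →ₗ.[ℂ] H2) (hTdense : Dense (T.domain : Set H1))
    (hTclosed : IsClosed (T.graph : Set (H1 × H2))) (v : H2) :
    ((∃ u : T.domain, T u = v) ↔
      ∃ C : ℝ, 0 ≤ C ∧
        ∀ u : T.adjoint.domain, ‖(inner ℂ (u : H2) v : ℂ)‖ ≤ C * ‖T.adjoint u‖) ∧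
    (∀ C : ℝ, 0 ≤ C →
      (∀ u : T.adjoint.domain, ‖(inner ℂ (u : H2) v : ℂ)‖ ≤ C * ‖T.adjoint u‖) →
      ∃ u : T.domain, T u = v ∧ ‖(u : H1)‖ ≤ C) := by
  have main : ∀ C : ℝ, 0 ≤ C →
      (∀ u : T.adjoint.domain, ‖(inner ℂ (u : H2) v : ℂ)‖ ≤ C * ‖T.adjoint u‖) →
      ∃ u : T.domain, T u = v ∧ ‖(u : H1)‖ ≤ C := by
    intro C hC hbound
    -- the adjoint as a plain linear map on its domain
    set A : T.adjoint.domain →ₗ[ℂ] H1 := T.adjoint.toFun with hA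
    have hAapp : ∀ w : T.adjoint.domain, A w = T.adjoint w := fun _ => rfl
    -- the conjugate-linear-fixed functional `w ↦ ⟪v, w⟫`
    set ψ : T.adjoint.domain →ₗ[ℂ] ℂ :=
      ((innerSL ℂ v).toLinearMap).comp T.adjoint.domain.subtype with hψ
    have hψapp : ∀ w : T.adjoint.domain, ψ w = (inner ℂ v (w : H2) : ℂ) := fun _ => rfl
    have hker : LinearMap.ker A ≤ LinearMap.ker ψ := by
      intro w hw
      have hw' : A w = 0 := hw
      have := hbound w
      rw [← hAapp, hw'] at this
      simp only [norm_zero, mul_zero] at this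
      have h0 : (inner ℂ (w : H2) v : ℂ) = 0 := norm_le_zero_iff.mp this
      have : (inner ℂ v (w : H2) : ℂ) = 0 := by
        rw [← inner_conj_symm, h0]; simp
      simpa [LinearMap.mem_ker, hψapp] using this
    -- functional on the range of A
    set f₀ : LinearMap.range A →ₗ[ℂ] ℂ :=
      ((LinearMap.ker A).liftQ ψ hker).comp A.quotKerEquivRange.symm.toLinearMap
      with hf₀
    have hf₀app : ∀ (w : T.adjoint.domain) (h : A w ∈ LinearMap.range A),
        f₀ ⟨A w, h⟩ = (inner ℂ v (w : H2) : ℂ) := by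
      intro w h
      have h2 : A.quotKerEquivRange.symm ⟨A w, h⟩ = (LinearMap.ker A).mkQ w :=
        A.quotKerEquivRange_symm_apply_image w h
      simp only [hf₀, LinearMap.comp_apply, LinearEquiv.coe_coe, h2, Submodule.mkQ_apply,
        Submodule.liftQ_apply]
      exact hψapp w
    have hf₀bound : ∀ x : LinearMap.range A, ‖f₀ x‖ ≤ C * ‖x‖ := by
      rintro ⟨x, hx⟩
      obtain ⟨w, rfl⟩ := hx
      rw [hf₀app w (LinearMap.mem_range_self A w)]
      have h1 : ‖(inner ℂ v (w : H2) : ℂ)‖ = ‖(inner ℂ (w : H2) v : ℂ)‖ := by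
        rw [← inner_conj_symm (w : H2) v, RCLike.norm_conj]
      rw [h1]
      calc ‖(inner ℂ (w : H2) v : ℂ)‖ ≤ C * ‖T.adjoint w‖ := hbound w
        _ = C * ‖(⟨A w, LinearMap.mem_range_self A w⟩ : LinearMap.range A)‖ := by
            rw [← hAapp]; rfl
    set f : LinearMap.range A →L[ℂ] ℂ := f₀.mkContinuous C hf₀bound with hf
    obtain ⟨F, hFext, hFnorm⟩ := exists_extension_norm_eq (LinearMap.range A) f
    have hFle : ‖F‖ ≤ C := hFnorm.le.trans (f₀.mkContinuous_norm_le hC hf₀bound)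
    set u : H1 := (toDual ℂ H1).symm F with hu
    have hukey : ∀ w : T.adjoint.domain, (inner ℂ u (T.adjoint w) : ℂ) = inner ℂ v (w : H2) := by
      intro w
      have h1 : (inner ℂ u (T.adjoint w) : ℂ) = F (T.adjoint w) := toDual_symm_apply
      rw [h1, ← hAapp]
      have h2 := hFext ⟨A w, LinearMap.mem_range_self A w⟩
      rw [show ((⟨A w, LinearMap.mem_range_self A w⟩ : LinearMap.range A) : H1) = A w from rfl]
        at h2
      rw [h2, hf, LinearMap.mkContinuous_apply, hf₀app]
    have hunorm : ‖u‖ ≤ C := by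
      rw [hu, LinearIsometryEquiv.norm_map]; exact hFle
    -- Now show (u, v) ∈ graph T via orthogonal complements in WithLp 2 (H1 × H2)
    set e : WithLp 2 (H1 × H2) ≃ₗ[ℂ] H1 × H2 := WithLp.linearEquiv 2 ℂ (H1 × H2) with he
    set G : Submodule ℂ (WithLp 2 (H1 × H2)) := T.graph.comap (e : _ →ₗ[ℂ] _) with hG
    have hGmem : ∀ z : WithLp 2 (H1 × H2), z ∈ G ↔ (z.fst, z.snd) ∈ T.graph := by
      intro z; rfl
    have hGclosed : IsClosed (G : Set (WithLp 2 (H1 × H2))) := by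
      have : (G : Set (WithLp 2 (H1 × H2))) =
          (WithLp.equiv 2 (H1 × H2)) ⁻¹' (T.graph : Set (H1 × H2)) := rfl
      rw [this]
      exact hTclosed.preimage (WithLp.prod_continuous_ofLp 2 H1 H2)
    haveI : CompleteSpace G := hGclosed.completeSpace_coe
    set p : WithLp 2 (H1 × H2) := (WithLp.equiv 2 (H1 × H2)).symm (u, v) with hp
    have hpG : p ∈ G := by
      rw [← Submodule.orthogonal_orthogonal G]
      rw [Submodule.mem_orthogonal]
      intro z hz
      -- z ∈ Gᗮ; show z.snd ∈ Dom T† with T† z.snd = -z.fst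
      have hzg : ∀ a : T.domain, (inner ℂ z.fst (a : H1) : ℂ) + inner ℂ z.snd (T a) = 0 := by
        intro a
        have hmem : ((WithLp.equiv 2 (H1 × H2)).symm ((a : H1), T a)) ∈ G := by
          rw [hGmem]
          simp only [WithLp.equiv_symm_apply, WithLp.toLp_fst, WithLp.toLp_snd]
          exact T.mem_graph a
        have := (Submodule.mem_orthogonal' G z).mp hz _ hmem
        rw [WithLp.prod_inner_apply] at this
        simpa [WithLp.toLp_fst, WithLp.toLp_snd] using this
      have hdom : z.snd ∈ T.adjoint.domain := by
        apply mem_adjoint_domain_of_exists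
        refine ⟨-z.fst, fun a => ?_⟩
        have := hzg a
        rw [inner_neg_left]
        linear_combination -this
      have hadj : T.adjoint ⟨z.snd, hdom⟩ = -z.fst := by
        apply adjoint_apply_eq hTdense
        intro a
        have := hzg a
        rw [inner_neg_left]
        linear_combination -this
      rw [WithLp.prod_inner_apply, WithLp.ofLp_fst, WithLp.ofLp_snd, WithLp.ofLp_fst, WithLp.ofLp_snd]
      have hpfst : p.fst = u := rfl
      have hpsnd : p.snd = v := rfl
      rw [hpfst, hpsnd]
      have h1 : (inner ℂ z.fst u : ℂ) = -inner ℂ z.snd v := by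
        have hfst : z.fst = -(T.adjoint ⟨z.snd, hdom⟩) := by rw [hadj, neg_neg]
        rw [hfst, inner_neg_left]
        have h2 : (inner ℂ (T.adjoint ⟨z.snd, hdom⟩) u : ℂ) = inner ℂ z.snd v := by
          simpa [inner_conj_symm] using congrArg (starRingEnd ℂ) (hukey ⟨z.snd, hdom⟩)
        rw [h2]
      rw [h1]; ring
    rw [hGmem] at hpG
    have hpfst : p.fst = u := rfl
    have hpsnd : p.snd = v := rfl
    rw [hpfst, hpsnd] at hpG
    rw [LinearPMap.mem_graph_iff] at hpG
    obtain ⟨u', hu'1, hu'2⟩ := hpG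
    exact ⟨u', hu'2, by rw [hu'1]; exact hunorm⟩
  refine ⟨⟨?_, ?_⟩, main⟩
  · rintro ⟨u, hu⟩
    refine ⟨‖(u : H1)‖, norm_nonneg _, fun w => ?_⟩
    have h1 : (inner ℂ (w : H2) v : ℂ) = inner ℂ (T.adjoint w) (u : H1) := by
      rw [← hu]
      exact ((adjoint_isFormalAdjoint hTdense) w u).symm
    rw [h1, mul_comm]
    exact norm_inner_le_norm _ _
  · rintro ⟨C, hC, hbound⟩
    obtain ⟨u, hu, -⟩ := main C hC hbound
    exact ⟨u, hu⟩
end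

section
/- Let H1, H2, H3 be complex Hilbert spaces, T : H1 → H2 and S : H2 → H3 closed densely defined operators with S ∘ T = 0. Suppose v ∈ ker S and there is a constant C ≥ 0 such that for every f ∈ Dom S ∩ Dom T* one has |⟨f, v⟩|² ≤ C(‖Sf‖² + ‖T*f‖²), and suppose every f ∈ Dom T* decomposes orthogonally as f₁ + f₂ with f₁ ∈ ker S ∩ Dom T* and f₂ ∈ (ker S)^⊥ ⊆ ker T*. Then there exists u ∈ H1 with Tu = v and ‖u‖² ≤ C. -/
/-- Key functional-analytic step in the L²-existence theorem: given closed
densely defined `T : H1 → H2`, `S : H2 → H3` with `S ∘ T = 0`, `v ∈ ker S` satisfying the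
a priori estimate `|⟨f, v⟩|² ≤ C(‖Sf‖² + ‖T*f‖²)` on `Dom S ∩ Dom T*`, and assuming every
`f ∈ Dom T*` splits orthogonally as `f₁ + f₂` with `f₁ ∈ ker S ∩ Dom T*` and
`f₂ ∈ (ker S)ᵖᵉʳᵖ ⊆ ker T*`, there is `u` with `T u = v` and `‖u‖² ≤ C`. -/
theorem L2_existence_step
    {H1 H2 H3 : Type*} [NormedAddCommGroup H1] [InnerProductSpace ℂ H1] [CompleteSpace H1]
    [NormedAddCommGroup H2] [InnerProductSpace ℂ H2] [CompleteSpace H2]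
    [NormedAddCommGroup H3] [InnerProductSpace ℂ H3] [CompleteSpace H3]
    (T : H1 →ₗ.[ℂ] H2) (S : H2 →ₗ.[ℂ] H3)
    (hTdense : Dense (T.domain : Set H1)) (hSdense : Dense (S.domain : Set H2))
    (hTclosed : IsClosed (T.graph : Set (H1 × H2)))
    (hSclosed : IsClosed (S.graph : Set (H2 × H3)))
    (hST : ∀ x : T.domain, ∃ hx : T x ∈ S.domain, S ⟨T x, hx⟩ = 0)
    (v : H2) (hv : v ∈ S.domain) (hv0 : S ⟨v, hv⟩ = 0)
    (C : ℝ) (hC : 0 ≤ C)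
    (hest : ∀ f : H2, ∀ hfS : f ∈ S.domain, ∀ hfT : f ∈ T.adjoint.domain,
      ‖(inner ℂ f v : ℂ)‖ ^ 2 ≤ C * (‖S ⟨f, hfS⟩‖ ^ 2 + ‖T.adjoint ⟨f, hfT⟩‖ ^ 2))
    (hdec : ∀ f : H2, f ∈ T.adjoint.domain → ∃ f₁ f₂ : H2, f = f₁ + f₂ ∧
      (∃ h₁ : f₁ ∈ S.domain, S ⟨f₁, h₁⟩ = 0) ∧ f₁ ∈ T.adjoint.domain ∧
      (∀ g : H2, ∀ hg : g ∈ S.domain, S ⟨g, hg⟩ = 0 → (inner ℂ f₂ g : ℂ) = 0) ∧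
      (∃ h₂ : f₂ ∈ T.adjoint.domain, T.adjoint ⟨f₂, h₂⟩ = 0)) :
    ∃ u : T.domain, T u = v ∧ ‖(u : H1)‖ ^ 2 ≤ C := by
  classical
  set A := T.adjoint with hAdef
  -- Step 1: the a priori estimate on all of Dom T*
  have key : ∀ f : A.domain, ‖(inner ℂ (f : H2) v : ℂ)‖ ≤ Real.sqrt C * ‖A f‖ := by
    intro f
    obtain ⟨f₁, f₂, hsum, ⟨h₁S, hS1⟩, h₁T, hperp, h₂T, hT2⟩ := hdec f f.2
    have hfv : (inner ℂ (f : H2) v : ℂ) = inner ℂ f₁ v := by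
      rw [show ((f : H2)) = f₁ + f₂ from hsum, inner_add_left, hperp v hv hv0, add_zero]
    have hfA : A f = A ⟨f₁, h₁T⟩ := by
      have hfe : f = (⟨f₁, h₁T⟩ + ⟨f₂, h₂T⟩ : A.domain) := Subtype.ext hsum
      rw [hfe, A.map_add, hT2, add_zero]
    have hest1 := hest f₁ h₁S h₁T
    rw [hS1] at hest1
    have hsq : ‖(inner ℂ (f : H2) v : ℂ)‖ ^ 2 ≤ C * ‖A f‖ ^ 2 := by
      rw [hfv, hfA]
      simpa using hest1
    have := Real.sqrt_le_sqrt hsq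
    rwa [Real.sqrt_sq (norm_nonneg _), Real.sqrt_mul hC, Real.sqrt_sq (norm_nonneg _)] at this
  -- Step 2: build a bounded functional on the range of T*
  set L : A.domain →ₗ[ℂ] H1 := A.toFun with hLdef
  set ψ : A.domain →ₗ[ℂ] ℂ := ((innerSL ℂ v).comp (A.domain.subtypeL)).toLinearMap with hψdef
  have hψ : ∀ f : A.domain, ψ f = inner ℂ v (f : H2) := fun f => rfl
  have hker : LinearMap.ker L ≤ LinearMap.ker ψ := by
    intro f hf
    have hf0 : A f = 0 := hf
    have := key f
    rw [hf0, norm_zero, mul_zero] at this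
    have h0 : (inner ℂ (f : H2) v : ℂ) = 0 := norm_le_zero_iff.mp this
    have : (inner ℂ v (f : H2) : ℂ) = 0 := inner_eq_zero_symm.mp h0
    simpa [LinearMap.mem_ker, hψ] using this
  set φq : (A.domain ⧸ LinearMap.ker L) →ₗ[ℂ] ℂ := Submodule.liftQ _ ψ hker with hφqdef
  set e := L.quotKerEquivRange with hedef
  set φlin : LinearMap.range L →ₗ[ℂ] ℂ := φq.comp e.symm.toLinearMap with hφlindef
  have hφ : ∀ f : A.domain, φlin ⟨L f, LinearMap.mem_range_self L f⟩ = inner ℂ v (f : H2) := by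
    intro f
    have h1 : e.symm ⟨L f, LinearMap.mem_range_self L f⟩ = Submodule.Quotient.mk f :=
      L.quotKerEquivRange_symm_apply_image f (LinearMap.mem_range_self L f)
    simp only [hφlindef, LinearMap.comp_apply, LinearEquiv.coe_toLinearMap, h1]
    rw [hφqdef, Submodule.liftQ_apply, hψ]
  have hbound : ∀ x : LinearMap.range L, ‖φlin x‖ ≤ Real.sqrt C * ‖(x : H1)‖ := by
    rintro ⟨x, hx⟩
    obtain ⟨f, hf⟩ := hx
    have hxe : (⟨x, ⟨f, hf⟩⟩ : LinearMap.range L) = ⟨L f, LinearMap.mem_range_self L f⟩ :=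
      Subtype.ext hf.symm
    rw [hxe, hφ f]
    have : ‖(inner ℂ v (f : H2) : ℂ)‖ = ‖(inner ℂ (f : H2) v : ℂ)‖ := norm_inner_symm _ _
    rw [this]
    exact key f
  set φ : LinearMap.range L →L[ℂ] ℂ := LinearMap.mkContinuous φlin (Real.sqrt C) hbound with hφdef
  have hφnorm : ‖φ‖ ≤ Real.sqrt C :=
    LinearMap.mkContinuous_norm_le φlin (Real.sqrt_nonneg C) hbound
  obtain ⟨g, hg_ext, hg_norm⟩ := exists_extension_norm_eq (LinearMap.range L) φ
  set u₀ : H1 := (InnerProductSpace.toDual ℂ H1).symm g with hu₀def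
  have hu₀ : ∀ x : H1, (inner ℂ u₀ x : ℂ) = g x := fun x =>
    InnerProductSpace.toDual_symm_apply
  have hu₀norm : ‖u₀‖ ≤ Real.sqrt C := by
    rw [hu₀def, LinearIsometryEquiv.norm_map, hg_norm]; exact hφnorm
  have hu₀sq : ‖u₀‖ ^ 2 ≤ C := by
    calc ‖u₀‖ ^ 2 ≤ Real.sqrt C ^ 2 := pow_le_pow_left₀ (norm_nonneg _) hu₀norm 2
    _ = C := Real.sq_sqrt hC
  -- the key identity ⟪u₀, T* f⟫ = ⟪v, f⟫
  have keyid : ∀ f : A.domain, (inner ℂ u₀ (A f) : ℂ) = inner ℂ v (f : H2) := by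
    intro f
    rw [hu₀ (A f)]
    have : A f = ((⟨L f, LinearMap.mem_range_self L f⟩ : LinearMap.range L) : H1) := rfl
    rw [this, hg_ext, hφdef]
    exact hφ f
  -- Step 3: (u₀, v) belongs to the graph of T
  set ι := (WithLp.linearEquiv 2 ℂ (H1 × H2)).symm with hιdef
  set K : Submodule ℂ (WithLp 2 (H1 × H2)) := T.graph.map (ι : (H1 × H2) →ₗ[ℂ] WithLp 2 (H1 × H2))
    with hKdef
  have hKclosed : IsClosed (K : Set (WithLp 2 (H1 × H2))) := by
    have : (K : Set (WithLp 2 (H1 × H2))) =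
        (WithLp.prodContinuousLinearEquiv 2 ℂ H1 H2) ⁻¹' (T.graph : Set (H1 × H2)) := by
      ext w
      simp only [hKdef, SetLike.mem_coe, Submodule.mem_map_equiv, Set.mem_preimage]
      rfl
    rw [this]
    exact hTclosed.preimage (WithLp.prodContinuousLinearEquiv 2 ℂ H1 H2).continuous
  haveI : CompleteSpace K := hKclosed.completeSpace_coe
  have hmem : ι (u₀, v) ∈ K := by
    rw [← Submodule.orthogonal_orthogonal K]
    rw [Submodule.mem_orthogonal]
    intro w hw
    -- identify the components of w
    set x : H1 := (WithLp.equiv 2 (H1 × H2) w).1 with hxdef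
    set y : H2 := (WithLp.equiv 2 (H1 × H2) w).2 with hydef
    have haveq : ∀ a : T.domain, (inner ℂ ((a : H1)) x : ℂ) + inner ℂ (T a) y = 0 := by
      intro a
      have hmem' : ι ((a : H1), T a) ∈ K :=
        Submodule.mem_map_of_mem (T.mem_graph a)
      have := (Submodule.mem_orthogonal K w).mp hw _ hmem'
      rw [WithLp.prod_inner_apply] at this
      exact this
    have hyT : ∀ a : T.domain, (inner ℂ (-x) ((a : H1)) : ℂ) = inner ℂ y (T a) := by
      intro a
      have h := haveq a
      have h' := congrArg (starRingEnd ℂ) h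
      rw [map_add, inner_conj_symm, inner_conj_symm, map_zero] at h'
      rw [inner_neg_left]
      linear_combination -h'
    have hyA : y ∈ A.domain :=
      T.mem_adjoint_domain_of_exists y ⟨-x, hyT⟩
    have hAy : A ⟨y, hyA⟩ = -x := LinearPMap.adjoint_apply_eq hTdense ⟨y, hyA⟩ hyT
    rw [WithLp.prod_inner_apply]
    have h1 : (inner ℂ x u₀ : ℂ) = -(starRingEnd ℂ) (inner ℂ v y : ℂ) := by
      have : x = -(A ⟨y, hyA⟩) := by rw [hAy, neg_neg]
      rw [this, inner_neg_left, ← inner_conj_symm, keyid ⟨y, hyA⟩]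
    have h2 : (inner ℂ y v : ℂ) = (starRingEnd ℂ) (inner ℂ v y : ℂ) := (inner_conj_symm _ _).symm
    show (inner ℂ x u₀ : ℂ) + inner ℂ y v = 0
    rw [h1, h2]
    ring
  have hgraph : (u₀, v) ∈ T.graph := by
    obtain ⟨p, hp, hpe⟩ := hmem
    have hpv : p = (u₀, v) := ι.injective hpe
    rwa [hpv] at hp
  rw [LinearPMap.mem_graph_iff] at hgraph
  obtain ⟨u, hu1, hu2⟩ := hgraph
  exact ⟨u, hu2, by rw [hu1]; exact hu₀sq⟩
end

section
/- Let 0 < ε₁ < ε₂ < ε₀ and k < n be given with ε₁ = ε₀/(100n²) and ε₂ = ε₀/(10n). Let λ₁ ≤ … ≤ λₙ be real numbers with −ε₁/(ε₂−ε₁) ≤ λ_i ≤ 1 for all i and λ_i ≥ 1 − ε₂/(ε₀−ε₁) for i ≥ k+1. Then for any p ≥ q with p + q > n + k, one has ∑_{i=1}^{p} λ_i + ∑_{j=1}^{q} λ_j − ∑_{i=1}^{n} λ_i ≥ 1/2. -/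
theorem curvature_aux (N K A B M Q : ℝ) (hN : 1 ≤ N) (hK0 : 0 ≤ K) (hKN : K ≤ N)
    (hA0 : 0 ≤ A) (hA1 : A ≤ 1) (hB0 : 0 ≤ B) (hAn : A * N ≤ 10 / 99) (hBn : B * N ≤ 1 / 9)
    (hM0 : 0 ≤ M) (hMn : M + 1 ≤ N) (hQM : M + 1 ≤ Q) :
    (1 : ℝ) / 2 ≤ -K * B + Q * (1 - A) - M * 1 := by
  nlinarith [mul_nonneg (sub_nonneg.mpr hQM) (sub_nonneg.mpr hA1),
    mul_nonneg (sub_nonneg.mpr hMn) hA0, mul_nonneg (sub_nonneg.mpr hKN) hB0]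

/-- Eigenvalue computation for the curvature operator on `(p,q)`-forms:
with `ε₁ = ε₀/(100n²)`, `ε₂ = ε₀/(10n)`, eigenvalues `λ₁ ≤ … ≤ λₙ` satisfying
`−ε₁/(ε₂−ε₁) ≤ λᵢ ≤ 1` and `λᵢ ≥ 1 − ε₂/(ε₀−ε₁)` for `i ≥ k+1`, one has for `p ≥ q` with
`p + q > n + k`: `∑_{i≤p} λᵢ + ∑_{j≤q} λⱼ − ∑_{i≤n} λᵢ ≥ 1/2`. -/
theorem curvature_eigenvalue_estimate
    (n k p q : ℕ) (ε₀ ε₁ ε₂ : ℝ) (l : ℕ → ℝ)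
    (hε₀ : 0 < ε₀) (hkn : k < n)
    (hε₁ : ε₁ = ε₀ / (100 * (n : ℝ) ^ 2)) (hε₂ : ε₂ = ε₀ / (10 * (n : ℝ)))
    (hmono : ∀ i j, i ≤ j → j < n → l i ≤ l j)
    (hlb : ∀ i < n, -ε₁ / (ε₂ - ε₁) ≤ l i)
    (hub : ∀ i < n, l i ≤ 1)
    (hbig : ∀ i, k ≤ i → i < n → 1 - ε₂ / (ε₀ - ε₁) ≤ l i)
    (hqp : q ≤ p) (hpn : p ≤ n) (hpq : n + k < p + q) :
    (1 : ℝ) / 2 ≤ ∑ i ∈ Finset.range p, l i + ∑ i ∈ Finset.range q, l i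
      - ∑ i ∈ Finset.range n, l i := by
  have hn1 : (1 : ℝ) ≤ (n : ℝ) := by exact_mod_cast Nat.one_le_iff_ne_zero.mpr (by omega)
  have hN : (0 : ℝ) < (n : ℝ) := by linarith
  -- explicit formulas for the two ratios
  set A : ℝ := ε₂ / (ε₀ - ε₁) with hA
  set B : ℝ := ε₁ / (ε₂ - ε₁) with hB
  have hden1 : (100 : ℝ) * (n : ℝ) ^ 2 - 1 > 0 := by nlinarith
  have hden2 : (10 : ℝ) * (n : ℝ) - 1 > 0 := by nlinarith
  have hd3 : 0 < ε₀ - ε₁ := by rw [hε₁]; rw [sub_pos]; rw [div_lt_iff₀ (by positivity)]; nlinarith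
  have hd4 : 0 < ε₂ - ε₁ := by
    rw [hε₁, hε₂, sub_pos, div_lt_div_iff₀ (by positivity) (by positivity)]
    have h10 : (10:ℝ) * (n:ℝ) < 100 * (n:ℝ) ^ 2 := by nlinarith
    exact mul_lt_mul_of_pos_left h10 hε₀
  have hAval : A = 10 * (n : ℝ) / (100 * (n : ℝ) ^ 2 - 1) := by
    rw [hA, hε₂, div_eq_div_iff hd3.ne' hden1.ne']
    field_simp [hε₁]
    have hx : ε₁ * (100 * (n:ℝ)^2) = ε₀ := by
      rw [hε₁]; exact div_mul_cancel₀ _ (mul_pos (by norm_num) (pow_pos hN 2)).ne'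
    linear_combination hx
  have hBval : B = 1 / (10 * (n : ℝ) - 1) := by
    rw [hB, div_eq_div_iff hd4.ne' hden2.ne']
    field_simp [hε₁, hε₂]
    have hy : ε₁ * (n:ℝ) * 10 = ε₂ := by
      rw [hε₁, hε₂, div_mul_eq_mul_div, div_mul_eq_mul_div,
        div_eq_div_iff (mul_pos (by norm_num) (pow_pos hN 2)).ne' (mul_pos (by norm_num) hN).ne']
      ring
    linear_combination hy
  have hApos : 0 ≤ A := by rw [hAval]; positivity
  have hBpos : 0 ≤ B := by rw [hBval]; positivity
  have hAn : A * (n : ℝ) ≤ 10 / 99 := by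
    rw [hAval, div_mul_eq_mul_div, div_le_div_iff₀ hden1 (by norm_num)]
    nlinarith
  have hBn : B * (n : ℝ) ≤ 1 / 9 := by
    rw [hBval, div_mul_eq_mul_div, div_le_div_iff₀ hden2 (by norm_num)]
    nlinarith
  have hA1 : A ≤ 1 := by nlinarith
  -- index arithmetic
  have hkq : k ≤ q := by omega
  have hp1 : 1 ≤ p := by omega
  -- sum splittings
  have h1 : ∑ i ∈ Finset.range p, l i + ∑ i ∈ Finset.Ico p n, l i
      = ∑ i ∈ Finset.range n, l i := Finset.sum_range_add_sum_Ico _ hpn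
  have h2 : ∑ i ∈ Finset.range k, l i + ∑ i ∈ Finset.Ico k q, l i
      = ∑ i ∈ Finset.range q, l i := Finset.sum_range_add_sum_Ico _ hkq
  -- bounds on the pieces
  have hSk : (k : ℝ) * (-ε₁ / (ε₂ - ε₁)) ≤ ∑ i ∈ Finset.range k, l i := by
    have := Finset.card_nsmul_le_sum (Finset.range k) l (-ε₁ / (ε₂ - ε₁))
      (fun i hi => hlb i (by simp at hi; omega))
    simpa [nsmul_eq_mul] using this
  have hSmid : ((q - k : ℕ) : ℝ) * (1 - A) ≤ ∑ i ∈ Finset.Ico k q, l i := by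
    have := Finset.card_nsmul_le_sum (Finset.Ico k q) l (1 - A)
      (fun i hi => by
        simp only [Finset.mem_Ico] at hi
        exact hbig i hi.1 (by omega))
    simpa [nsmul_eq_mul, Nat.card_Ico] using this
  have hStop : ∑ i ∈ Finset.Ico p n, l i ≤ ((n - p : ℕ) : ℝ) * 1 := by
    have := Finset.sum_le_card_nsmul (Finset.Ico p n) l 1
      (fun i hi => by
        simp only [Finset.mem_Ico] at hi
        exact hub i hi.2)
    simpa [nsmul_eq_mul, Nat.card_Ico] using this
  -- combine
  have hkB : (k : ℝ) * (-ε₁ / (ε₂ - ε₁)) = -(k : ℝ) * B := by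
    rw [hB]; ring
  have hQM : ((n - p : ℕ) : ℝ) + 1 ≤ ((q - k : ℕ) : ℝ) := by
    have : (n - p) + 1 ≤ q - k := by omega
    exact_mod_cast this
  have hMn : ((n - p : ℕ) : ℝ) + 1 ≤ (n : ℝ) := by
    have : (n - p) + 1 ≤ n := by omega
    exact_mod_cast this
  have hkn' : (k : ℝ) ≤ (n : ℝ) := by exact_mod_cast hkn.le
  have key : (1 : ℝ) / 2 ≤ -(k : ℝ) * B + ((q - k : ℕ) : ℝ) * (1 - A)
      - ((n - p : ℕ) : ℝ) * 1 :=
    curvature_aux (n:ℝ) (k:ℝ) A B ((n-p:ℕ):ℝ) ((q-k:ℕ):ℝ) hn1 (Nat.cast_nonneg k)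
      hkn' hApos hA1 hBpos hAn hBn (Nat.cast_nonneg _) hMn hQM
  have hfin : ∑ i ∈ Finset.range p, l i + ∑ i ∈ Finset.range q, l i
      - ∑ i ∈ Finset.range n, l i
      = (∑ i ∈ Finset.range k, l i + ∑ i ∈ Finset.Ico k q, l i)
        - ∑ i ∈ Finset.Ico p n, l i := by
    rw [h2, ← h1]; ring
  rw [hfin]
  calc (1 : ℝ) / 2 ≤ -(k : ℝ) * B + ((q - k : ℕ) : ℝ) * (1 - A)
      - ((n - p : ℕ) : ℝ) * 1 := key
    _ ≤ _ := by
        rw [← hkB]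
        have := add_le_add hSk hSmid
        linarith [hStop]
end
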